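/- Let q be a prime power, m ≥ 2 an integer, n = (q^m − 1)/(q − 1), and t = (n − 1)/q = (q^{m−1} − 1)/(q − 1). Let Q(t, q) denote the number of t-ary quasigroups of order q. Then the number of perfect codes in F_q^n is at least Q(t, q)^{q^t/(t(q−1)+1)}, where q^t/(t(q−1)+1) = q^{t−m+1} is the cardinality of a perfect code of length t over F_q. -/

import Mathlib

set_option linter.unusedSectionVars false
set_option linter.unusedVariables false
set_option linter.unusedTactic false
set_option maxHeartbeats 1000000

open Function Projectivization

/-- A perfect 1-error-correcting code: every word of the ambient space is within
Hamming distance 1 of exactly one codeword. -/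
def IsPerfectCode {ι α : Type*} [Fintype ι] [DecidableEq α] (C : Set (ι → α)) : Prop :=
  ∀ x : ι → α, ∃! c, c ∈ C ∧ hammingDist x c ≤ 1

/-- An `ι`-ary quasigroup: a function `f : (ι → S) → S` that is bijective in each
argument when the other arguments are fixed. -/
def IsMultiQuasigroup {ι S : Type*} [DecidableEq ι] (f : (ι → S) → S) : Prop :=
  ∀ (i : ι) (x : ι → S), Function.Bijective fun a => f (Function.update x i a)

lemma ber (p k : ℕ) : k * p + 1 ≤ (p + 1) ^ k := by
  induction k with
  | zero => simp
  | succ k ih =>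
    rw [pow_succ]
    have h1 : 1 ≤ (p + 1) ^ k := Nat.one_le_pow _ _ (Nat.succ_pos p)
    nlinarith [ih, h1]


section T
variable {ι κ α : Type*} [Fintype ι] [Fintype κ] [DecidableEq α]

lemma hammingDist_comp_equiv (e : κ ≃ ι) (x y : ι → α) :
    hammingDist (x ∘ e) (y ∘ e) = hammingDist x y := by
  unfold hammingDist
  apply Finset.card_nbij e (fun a ha => by simpa using ha) (by intro a _ b _ h; exact e.injective h)
  intro i hi
  exact ⟨e.symm i, by simpa using hi⟩

noncomputable def precompEquiv (e : κ ≃ ι) : (ι → α) ≃ (κ → α) :=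
  Equiv.arrowCongr e.symm (Equiv.refl α)

lemma IsPerfectCode.image (e : κ ≃ ι) {C : Set (ι → α)} (hC : IsPerfectCode C) :
    IsPerfectCode ((precompEquiv e) '' C) := by
  intro y
  obtain ⟨c, ⟨hc, hd⟩, hu⟩ := hC (y ∘ e.symm)
  have key : ∀ z : ι → α, precompEquiv e z = z ∘ e := fun z => rfl
  refine ⟨precompEquiv e c, ⟨Set.mem_image_of_mem _ hc, ?_⟩, ?_⟩
  · rw [key]
    have : y = (y ∘ e.symm) ∘ e := by funext k; simp
    rw [this, hammingDist_comp_equiv e]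
    exact hd
  · rintro c' ⟨⟨c₀, hc₀, rfl⟩, hd'⟩
    have : c₀ = c := by
      apply hu
      refine ⟨hc₀, ?_⟩
      have h2 : y = (y ∘ e.symm) ∘ e := by funext k; simp
      rw [key, h2, hammingDist_comp_equiv e] at hd'
      exact hd'
    rw [this]

noncomputable def perfectCodeEquiv (e : κ ≃ ι) :
    {C : Set (ι → α) // IsPerfectCode C} ≃ {C : Set (κ → α) // IsPerfectCode C} := by
  refine Equiv.subtypeEquiv (Equiv.Set.congr (precompEquiv e)) (fun C => ⟨fun h => h.image e, fun h => ?_⟩)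
  have := h.image e.symm
  have h2 : (precompEquiv e.symm : (κ → α) ≃ (ι → α)) '' ((Equiv.Set.congr (precompEquiv e)) C) = C := by
    show (precompEquiv e.symm) '' ((precompEquiv e) '' C) = C
    rw [← Set.image_comp]
    have : (precompEquiv e.symm : (κ → α) → (ι → α)) ∘ (precompEquiv e) = id := by
      funext z k; simp [precompEquiv]
    rw [this, Set.image_id]
  rwa [h2] at this

end T



lemma hammingDist_le_one_iff {ι α : Type*} [Fintype ι] [DecidableEq α] {x y : ι → α} :
    hammingDist x y ≤ 1 ↔ ∀ i j, x i ≠ y i → x j ≠ y j → i = j := by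
  rw [hammingDist, Finset.card_le_one]
  constructor
  · intro h i j hi hj
    exact h i (by simpa using hi) j (by simpa using hj)
  · intro h i hi j hj
    exact h i j (by simpa using hi) (by simpa using hj)

lemma hammingDist_update_le {ι α : Type*} [Fintype ι] [DecidableEq ι] [DecidableEq α]
    (x : ι → α) (i : ι) (a : α) :
    hammingDist x (Function.update x i a) ≤ 1 := by
  rw [hammingDist_le_one_iff]
  intro k l hk hl
  by_contra h
  rcases ne_or_eq k i with hk' | rfl
  · exact hk (by simp [Function.update_apply, hk'])
  · exact hl (by simp [Function.update_apply, show ¬ l = k from fun hlk => h hlk.symm])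

lemma eq_update_of_hammingDist_le_one {ι α : Type*} [Fintype ι] [DecidableEq ι] [DecidableEq α]
    {x y : ι → α} (h : hammingDist x y ≤ 1) (hne : y ≠ x) :
    ∃ i, y i ≠ x i ∧ y = Function.update x i (y i) := by
  have : ∃ i, x i ≠ y i := by
    by_contra hc
    push_neg at hc
    exact hne (funext fun i => (hc i).symm)
  obtain ⟨i, hi⟩ := this
  refine ⟨i, fun he => hi he.symm, funext fun j => ?_⟩
  rcases eq_or_ne j i with rfl | hj
  · simp
  · rw [Function.update_apply, if_neg hj]
    by_contra hxy
    exact hj (hammingDist_le_one_iff.1 h j i (fun he => hxy he.symm) hi)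

section HammingCode
variable (F : Type*) [Field F] [Fintype F] [DecidableEq F] (r : ℕ)

local notation "ℙF" => Projectivization F (Fin r → F)

instance : Finite (Projectivization F (Fin r → F)) :=
  (Quotient.finite _ : Finite (Quotient (projectivizationSetoid F (Fin r → F))))

noncomputable instance : Fintype (Projectivization F (Fin r → F)) := Fintype.ofFinite _
noncomputable local instance : DecidableEq (Projectivization F (Fin r → F)) := Classical.decEq _

/-- The syndrome map of the Hamming code. -/
noncomputable def syndL : (ℙF → F) →ₗ[F] (Fin r → F) where
  toFun x := ∑ p : ℙF, x p • p.rep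
  map_add' x y := by simp [add_smul, Finset.sum_add_distrib]
  map_smul' c x := by simp [smul_smul, Finset.smul_sum]

lemma syndL_apply (x : ℙF → F) : syndL F r x = ∑ p : ℙF, x p • p.rep := rfl

lemma syndL_single (p : ℙF) (a : F) : syndL F r (Pi.single p a) = a • p.rep := by
  rw [syndL_apply, Finset.sum_eq_single p]
  · simp
  · intro q _ hq; simp [Pi.single_eq_of_ne hq]
  · simp

lemma update_eq_add_single (x : ℙF → F) (p : ℙF) (a : F) :
    Function.update x p a = x + Pi.single p (a - x p) := by
  funext q
  rcases eq_or_ne q p with rfl | hq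
  · simp
  · simp [Function.update_apply, hq, Pi.single_eq_of_ne hq]

lemma syndL_update (x : ℙF → F) (p : ℙF) (a : F) :
    syndL F r (Function.update x p a) = syndL F r x + (a - x p) • p.rep := by
  rw [update_eq_add_single, map_add, syndL_single]

lemma syndL_surjective : Function.Surjective (syndL F r) := by
  intro v
  rcases eq_or_ne v 0 with rfl | hv
  · exact ⟨0, map_zero _⟩
  · obtain ⟨a, ha⟩ := exists_smul_eq_mk_rep F v hv
    refine ⟨Pi.single (mk F v hv) ((a⁻¹ : Fˣ) : F), ?_⟩
    rw [syndL_single, ← ha, Units.smul_def, smul_smul, Units.inv_mul, one_smul]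

/-- The Hamming code of length `(q^r - 1)/(q - 1)`. -/
noncomputable def hammingCode : Set (ℙF → F) := (LinearMap.ker (syndL F r) : Set (ℙF → F))

lemma mem_hammingCode {x : ℙF → F} : x ∈ hammingCode F r ↔ syndL F r x = 0 :=
  LinearMap.mem_ker

lemma hammingCode_isPerfect : IsPerfectCode (hammingCode F r) := by
  intro x
  by_cases hv : syndL F r x = 0
  · refine ⟨x, ⟨(mem_hammingCode F r).2 hv, by simp⟩, ?_⟩
    rintro c ⟨hc, hd⟩
    rcases eq_or_ne c x with rfl | hne
    · rfl
    obtain ⟨p, hp, hcu⟩ := eq_update_of_hammingDist_le_one hd hne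
    exfalso
    have h0 := (mem_hammingCode F r).1 hc
    rw [hcu, syndL_update, hv, zero_add] at h0
    exact smul_ne_zero (sub_ne_zero.2 hp) (rep_nonzero p) h0
  · obtain ⟨a, ha⟩ := exists_smul_eq_mk_rep F _ hv
    set p : ℙF := mk F (syndL F r x) hv with hpdef
    set lam : F := ((a⁻¹ : Fˣ) : F) with hlamdef
    have hlv : lam • p.rep = syndL F r x := by
      rw [← ha, Units.smul_def, smul_smul, hlamdef, Units.inv_mul, one_smul]
    have hlam0 : lam ≠ 0 := Units.ne_zero _
    refine ⟨Function.update x p (x p - lam), ⟨?_, hammingDist_update_le x p _⟩, ?_⟩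
    · rw [mem_hammingCode, syndL_update,
        show x p - lam - x p = -lam by ring, neg_smul, hlv]
      simp
    · rintro c ⟨hc, hd⟩
      have hne : c ≠ x := by
        rintro rfl; exact hv ((mem_hammingCode F r).1 hc)
      obtain ⟨p', hp', hcu⟩ := eq_update_of_hammingDist_le_one hd hne
      have h0 := (mem_hammingCode F r).1 hc
      rw [hcu, syndL_update] at h0
      have hveq : (x p' - c p') • p'.rep = syndL F r x := by
        have h1 : syndL F r x = -((c p' - x p') • p'.rep) := by
          rwa [add_eq_zero_iff_eq_neg] at h0
        rw [h1, ← neg_smul, neg_sub]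
      have h4 : mk F (syndL F r x) hv = mk F p'.rep (rep_nonzero p') :=
        (mk_eq_mk_iff' F _ _ hv (rep_nonzero p')).2 ⟨_, hveq⟩
      have hpp : p' = p := ((mk_rep p').symm.trans h4.symm).trans hpdef.symm
      rw [hpp] at hp' hcu hveq
      have hdel : c p = x p - lam := by
        have h2 : (x p - c p - lam) • p.rep = 0 := by
          rw [sub_smul, hveq, hlv, sub_self]
        rcases smul_eq_zero.1 h2 with h3 | h3
        · have h5 := sub_eq_zero.mp h3
          rw [← h5]; ring
        · exact absurd h3 (rep_nonzero p)
      rw [hcu, hdel]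

end HammingCode

section Card
variable (F : Type*) [Field F] [Fintype F] [DecidableEq F] (r : ℕ)

local notation "ℙF" => Projectivization F (Fin r → F)

noncomputable def projUnitsEquiv : ℙF × Fˣ ≃ {v : Fin r → F // v ≠ 0} := by
  apply Equiv.ofBijective
    (fun pu => ⟨(pu.2 : F) • pu.1.rep, smul_ne_zero (Units.ne_zero pu.2) (rep_nonzero pu.1)⟩)
  constructor
  · rintro ⟨p, u⟩ ⟨p', u'⟩ h
    simp only [Subtype.mk.injEq] at h
    have hpp : p = p' := by
      rw [← mk_rep p, ← mk_rep p']
      refine (mk_eq_mk_iff' F _ _ (rep_nonzero p) (rep_nonzero p')).2 ⟨(u : F)⁻¹ * (u' : F), ?_⟩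
      rw [mul_smul, ← h, smul_smul, inv_mul_cancel₀ (Units.ne_zero u), one_smul]
    subst hpp
    have huu : (u : F) = (u' : F) := by
      by_contra hne
      have : ((u : F) - (u' : F)) • p.rep = 0 := by rw [sub_smul, h, sub_self]
      rcases smul_eq_zero.1 this with h3 | h3
      · exact hne (sub_eq_zero.mp h3)
      · exact rep_nonzero p h3
    simp [Prod.ext_iff, Units.ext_iff, huu]
  · rintro ⟨v, hv⟩
    obtain ⟨a, ha⟩ := exists_smul_eq_mk_rep F v hv
    refine ⟨⟨mk F v hv, a⁻¹⟩, ?_⟩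
    simp only [Subtype.mk.injEq]
    rw [← ha, Units.smul_def, smul_smul, Units.inv_mul, one_smul]

lemma natCard_proj_mul :
    Nat.card ℙF * (Fintype.card F - 1) = Fintype.card F ^ r - 1 := by
  have h1 := Nat.card_congr (projUnitsEquiv F r)
  rw [Nat.card_prod] at h1
  have h2 : Nat.card Fˣ = Fintype.card F - 1 := by
    rw [Nat.card_eq_fintype_card, Fintype.card_units]
  have h3 : Nat.card {v : Fin r → F // v ≠ 0} = Fintype.card F ^ r - 1 := by
    rw [Nat.card_eq_fintype_card, Fintype.card_subtype_compl (· = 0), Fintype.card_subtype_eq,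
      Fintype.card_fun, Fintype.card_fin]
  rw [h2, h3] at h1
  exact h1

lemma natCard_hammingCode :
    Nat.card (hammingCode F r) = Fintype.card F ^ (Nat.card ℙF - r) := by
  have h1 : Nat.card (hammingCode F r) = Nat.card (LinearMap.ker (syndL F r)) := rfl
  have hr : LinearMap.range (syndL F r) = ⊤ := LinearMap.range_eq_top.2 (syndL_surjective F r)
  have hrk : Module.finrank F (LinearMap.range (syndL F r)) = r := by
    rw [hr, finrank_top, Module.finrank_pi, Fintype.card_fin]
  have hnull := LinearMap.finrank_range_add_finrank_ker (syndL F r)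
  rw [hrk, Module.finrank_pi] at hnull
  have hker : Module.finrank F (LinearMap.ker (syndL F r)) = Nat.card ℙF - r := by
    rw [Nat.card_eq_fintype_card]; omega
  letI : Fintype (LinearMap.ker (syndL F r)) := Fintype.ofFinite _
  rw [h1, Nat.card_eq_fintype_card, Module.card_eq_pow_finrank (K := F), hker]

end Card




lemma hammingDist_le_one_of {ι α : Type*} [Fintype ι] [DecidableEq α] {x y : ι → α}
    (k : ι) (h : ∀ l, l ≠ k → x l = y l) : hammingDist x y ≤ 1 := by
  rw [hammingDist_le_one_iff]
  intro i j hi hj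
  rcases eq_or_ne i k with hik | hik
  · rcases eq_or_ne j k with hjk | hjk
    · exact hik.trans hjk.symm
    · exact absurd (h j hjk) hj
  · exact absurd (h i hik) hi

section Vasilev
variable {F : Type*} [Field F] [Fintype F] [DecidableEq F] {τ : Type*} [Fintype τ] [DecidableEq τ]

variable (F τ) in
/-- Block sums. -/
def bsum (x : τ × F → F) : τ → F := fun j => ∑ i : F, x (j, i)

variable (F τ) in
/-- Weighted block sums. -/
def wsum (x : τ × F → F) : τ → F := fun j => ∑ i : F, i * x (j, i)

lemma line_update (x : τ × F → F) (k : τ × F) (b : F) (i' : F) :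
    Function.update x k b (k.1, i') = Function.update (fun u => x (k.1, u)) k.2 b i' := by
  rcases eq_or_ne i' k.2 with rfl | h
  · simp
  · rw [Function.update_apply, Function.update_apply, if_neg h, if_neg]
    intro hc
    rw [← hc] at h
    simp at h

lemma bsum_update (x : τ × F → F) (k : τ × F) (b : F) :
    bsum F τ (Function.update x k b)
      = Function.update (bsum F τ x) k.1 (bsum F τ x k.1 + (b - x k)) := by
  funext j
  rcases eq_or_ne j k.1 with rfl | hj
  · rw [Function.update_self]
    show ∑ i' : F, Function.update x k b (k.1, i') = _
    simp_rw [line_update]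
    rw [Finset.sum_update_of_mem (Finset.mem_univ k.2)]
    have h2 : bsum F τ x k.1 = ∑ i' ∈ Finset.univ \ {k.2}, x (k.1, i') + x (k.1, k.2) := by
      rw [bsum, ← Finset.sum_eq_sum_sdiff_singleton_add (Finset.mem_univ k.2)]
    rw [h2]
    have : x (k.1, k.2) = x k := by rw [Prod.mk.eta]
    rw [this]; ring
  · rw [Function.update_of_ne hj]
    show ∑ i' : F, Function.update x k b (j, i') = ∑ i' : F, x (j, i')
    apply Finset.sum_congr rfl
    intro i' _
    apply Function.update_of_ne
    intro hc
    exact hj (congrArg Prod.fst hc)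

lemma wsum_update (x : τ × F → F) (k : τ × F) (b : F) :
    wsum F τ (Function.update x k b)
      = Function.update (wsum F τ x) k.1 (wsum F τ x k.1 + k.2 * (b - x k)) := by
  funext j
  rcases eq_or_ne j k.1 with rfl | hj
  · rw [Function.update_self]
    show ∑ i' : F, i' * Function.update x k b (k.1, i') = _
    simp_rw [line_update]
    have h1 : (fun i' => i' * Function.update (fun u => x (k.1, u)) k.2 b i')
        = Function.update (fun i' => i' * x (k.1, i')) k.2 (k.2 * b) := by
      funext i'
      rcases eq_or_ne i' k.2 with rfl | h
      · simp
      · rw [Function.update_of_ne h, Function.update_of_ne h]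
    rw [h1, Finset.sum_update_of_mem (Finset.mem_univ k.2)]
    have h2 : wsum F τ x k.1 = ∑ i' ∈ Finset.univ \ {k.2}, i' * x (k.1, i') + k.2 * x (k.1, k.2) := by
      rw [wsum, ← Finset.sum_eq_sum_sdiff_singleton_add (Finset.mem_univ k.2)]
    rw [h2]
    have : x (k.1, k.2) = x k := by rw [Prod.mk.eta]
    rw [this]; ring
  · rw [Function.update_of_ne hj]
    show ∑ i' : F, i' * Function.update x k b (j, i') = ∑ i' : F, i' * x (j, i')
    apply Finset.sum_congr rfl
    intro i' _
    congr 1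
    apply Function.update_of_ne
    intro hc
    exact hj (congrArg Prod.fst hc)

variable (τ) in
/-- A probe word with prescribed block sums and weighted block sums. -/
def probe (c σ : τ → F) : τ × F → F :=
  fun k => if k.2 = 0 then c k.1 - σ k.1 else if k.2 = 1 then σ k.1 else 0

lemma bsum_probe (c σ : τ → F) : bsum F τ (probe τ c σ) = c := by
  funext j
  show (∑ i : F, probe τ c σ (j, i)) = c j
  have : ∀ i : F, probe τ c σ (j, i)
      = (if i = 0 then c j - σ j else 0) + (if i = 1 then σ j else 0) := by
    intro i
    rcases eq_or_ne i 0 with rfl | h0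
    · simp [probe, (zero_ne_one (α := F)).symm]
    · rcases eq_or_ne i 1 with rfl | h1
      · simp [probe, (one_ne_zero (α := F))]
      · simp [probe, h0, h1]
  simp_rw [this]
  rw [Finset.sum_add_distrib, Finset.sum_ite_eq' Finset.univ (0 : F),
    Finset.sum_ite_eq' Finset.univ (1 : F)]
  simp

lemma wsum_probe (c σ : τ → F) : wsum F τ (probe τ c σ) = σ := by
  funext j
  show (∑ i : F, i * probe τ c σ (j, i)) = σ j
  have : ∀ i : F, i * probe τ c σ (j, i) = (if i = 1 then σ j else 0) := by
    intro i
    rcases eq_or_ne i 0 with rfl | h0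
    · simp [probe, (zero_ne_one (α := F)).symm]
    · rcases eq_or_ne i 1 with rfl | h1
      · simp [probe, (one_ne_zero (α := F))]
      · simp [probe, h0, h1]
  simp_rw [this]
  rw [Finset.sum_ite_eq' Finset.univ (1 : F)]
  simp

variable (F τ) in
/-- The generalized Vasil'ev code built from a perfect code `D` and a family of
quasigroups indexed by `D`. -/
def vasilev (D : Set (τ → F)) (fam : D → {f : (τ → F) → F // IsMultiQuasigroup f}) :
    Set ((τ × F) ⊕ Unit → F) :=
  {w | ∃ h : bsum F τ (w ∘ Sum.inl) ∈ D,
    w (Sum.inr ()) = (fam ⟨bsum F τ (w ∘ Sum.inl), h⟩).1 (wsum F τ (w ∘ Sum.inl))}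

lemma fam_congr {D : Set (τ → F)} (fam : D → {f : (τ → F) → F // IsMultiQuasigroup f})
    {c c' : τ → F} (h : c ∈ D) (h' : c' ∈ D) (hcc : c = c') :
    (fam ⟨c, h⟩).1 = (fam ⟨c', h'⟩).1 := by
  cases hcc; rfl

end Vasilev

section Vasilev2
variable {F : Type*} [Field F] [Fintype F] [DecidableEq F] {τ : Type*} [Fintype τ] [DecidableEq τ]

lemma hammingDist_update_le' {ι α : Type*} [Fintype ι] [DecidableEq ι] [DecidableEq α]
    (x : ι → α) (i : ι) (a : α) :
    hammingDist x (Function.update x i a) ≤ 1 :=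
  hammingDist_le_one_of i (fun l hl => (Function.update_of_ne hl _ _).symm)

lemma mem_vasilev_iff {D : Set (τ → F)} {fam : D → {f : (τ → F) → F // IsMultiQuasigroup f}}
    {w : (τ × F) ⊕ Unit → F} :
    w ∈ vasilev F τ D fam ↔ ∃ c : D, (c : τ → F) = bsum F τ (w ∘ Sum.inl) ∧
      w (Sum.inr ()) = (fam c).1 (wsum F τ (w ∘ Sum.inl)) := by
  constructor
  · rintro ⟨h, he⟩
    exact ⟨⟨_, h⟩, rfl, he⟩
  · rintro ⟨⟨cv, hcD⟩, hc, he⟩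
    subst hc
    exact ⟨hcD, he⟩

lemma upr_inl (w : (τ × F) ⊕ Unit → F) (a : F) :
    (Function.update w (Sum.inr ()) a) ∘ Sum.inl = w ∘ Sum.inl :=
  funext fun k => Function.update_of_ne (by simp) _ _

lemma upl_inl (w : (τ × F) ⊕ Unit → F) (k : τ × F) (b : F) :
    (Function.update w (Sum.inl k) b) ∘ Sum.inl = Function.update (w ∘ Sum.inl) k b :=
  Function.update_comp_eq_of_injective w Sum.inl_injective k b

lemma upl_inr (w : (τ × F) ⊕ Unit → F) (k : τ × F) (b : F) :
    (Function.update w (Sum.inl k) b) (Sum.inr ()) = w (Sum.inr ()) :=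
  Function.update_of_ne (by simp) _ _

lemma sum_decomp {w w'' : (τ × F) ⊕ Unit → F} (hdist : hammingDist w w'' ≤ 1)
    (hne : w'' ∘ Sum.inl ≠ w ∘ Sum.inl) :
    ∃ k, (w'' ∘ Sum.inl) k ≠ (w ∘ Sum.inl) k ∧
      w'' ∘ Sum.inl = Function.update (w ∘ Sum.inl) k ((w'' ∘ Sum.inl) k) ∧
      w'' (Sum.inr ()) = w (Sum.inr ()) := by
  have hex : ∃ k, (w'' ∘ Sum.inl) k ≠ (w ∘ Sum.inl) k := by
    by_contra hc
    push_neg at hc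
    exact hne (funext hc)
  obtain ⟨k, hk⟩ := hex
  have hchar := hammingDist_le_one_iff.1 hdist
  refine ⟨k, hk, funext fun k' => ?_, ?_⟩
  · rcases eq_or_ne k' k with rfl | h
    · simp
    · rw [Function.update_of_ne h]
      by_contra hc
      exact h (Sum.inl_injective
        (hchar (Sum.inl k') (Sum.inl k) (fun hh => hc hh.symm) (fun hh => hk hh.symm)))
  · by_contra hc
    exact absurd (hchar (Sum.inr ()) (Sum.inl k) (fun hh => hc hh.symm) (fun hh => hk hh.symm))
      (by simp)

theorem vasilev_isPerfect {D : Set (τ → F)} (hD : IsPerfectCode D)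
    (fam : D → {f : (τ → F) → F // IsMultiQuasigroup f}) :
    IsPerfectCode (vasilev F τ D fam) := by
  intro w
  by_cases hxD : bsum F τ (w ∘ Sum.inl) ∈ D
  case pos =>
    set x : τ × F → F := w ∘ Sum.inl with hxdef
    set A : F := (fam ⟨bsum F τ x, hxD⟩).1 (wsum F τ x) with hAdef
    refine ⟨Function.update w (Sum.inr ()) A, ⟨?_, ?_⟩, ?_⟩
    · apply mem_vasilev_iff.2
      refine ⟨⟨bsum F τ x, hxD⟩, by rw [upr_inl], ?_⟩
      rw [upr_inl]
      simp
      rfl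
    · exact hammingDist_le_one_of (Sum.inr ())
        (fun l hl => (Function.update_of_ne hl _ _).symm)
    · rintro w'' ⟨hmem, hdist⟩
      obtain ⟨c'', hc'', he''⟩ := mem_vasilev_iff.1 hmem
      have key : w'' ∘ Sum.inl = x := by
        by_contra hne
        obtain ⟨k, hk, hup, -⟩ := sum_decomp hdist hne
        rw [← hxdef] at hk hup
        obtain ⟨c0, -, hu0⟩ := hD (bsum F τ x)
        have e1 : bsum F τ x = c0 := hu0 _ ⟨hxD, by simp⟩
        have e2 : bsum F τ (w'' ∘ Sum.inl) = c0 := by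
          apply hu0
          refine ⟨by rw [← hc'']; exact c''.2, ?_⟩
          rw [hup, bsum_update]
          exact hammingDist_update_le' _ _ _
        have e3 : bsum F τ (w'' ∘ Sum.inl) = bsum F τ x := e2.trans e1.symm
        rw [hup, bsum_update] at e3
        have e4 := congrFun e3 k.1
        rw [Function.update_self] at e4
        have h5 : (w'' ∘ Sum.inl) k - x k = 0 := by
          have h6 : bsum F τ x k.1 + ((w'' ∘ Sum.inl) k - x k) = bsum F τ x k.1 + 0 := by
            rw [add_zero]; exact e4
          exact add_left_cancel h6
        exact hk (sub_eq_zero.1 h5)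
      funext l
      rcases l with k | u
      · show (w'' ∘ Sum.inl) k = (Function.update w (Sum.inr ()) A ∘ Sum.inl) k
        rw [key, upr_inl]
      · cases u
        rw [Function.update_self, he'', key]
        have hcx : (c'' : τ → F) = bsum F τ x := by rw [hc'', key]
        obtain ⟨cv, hcD''⟩ := c''
        exact congrFun (fam_congr fam hcD'' hxD hcx) _
  case neg =>
    set x : τ × F → F := w ∘ Sum.inl with hxdef
    obtain ⟨c, ⟨hcD, hcd⟩, hcu⟩ := hD (bsum F τ x)
    have hcne : c ≠ bsum F τ x := fun h => hxD (h ▸ hcD)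
    obtain ⟨j, hj, hcup⟩ := eq_update_of_hammingDist_le_one hcd hcne
    set δ : F := c j - bsum F τ x j with hδdef
    have hδ0 : δ ≠ 0 := sub_ne_zero.2 hj
    have hbij1 := (fam ⟨c, hcD⟩).2 j (wsum F τ x)
    have hbij2 : Function.Bijective (fun i : F => wsum F τ x j + i * δ) := by
      rw [← Finite.injective_iff_bijective]
      intro a b hab
      simp only [add_right_inj] at hab
      exact mul_right_cancel₀ hδ0 hab
    have hbij : Function.Bijective
        (fun i : F => (fam ⟨c, hcD⟩).1
          (Function.update (wsum F τ x) j (wsum F τ x j + i * δ))) :=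
      hbij1.comp hbij2
    obtain ⟨i₀, hi₀, hi₀u⟩ := hbij.existsUnique (w (Sum.inr ()))
    set b₀ : F := x (j, i₀) + δ with hb₀def
    have hb : Function.update x (j, i₀) b₀ = Function.update x (j, i₀) (x (j, i₀) + δ) := rfl
    have hbs : bsum F τ (Function.update x (j, i₀) b₀) = c := by
      rw [bsum_update]
      show Function.update (bsum F τ x) j (bsum F τ x j + (b₀ - x (j, i₀))) = c
      rw [show b₀ - x (j, i₀) = δ by rw [hb₀def]; ring,
        show bsum F τ x j + δ = c j by rw [hδdef]; ring, ← hcup]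
    have hws : wsum F τ (Function.update x (j, i₀) b₀)
        = Function.update (wsum F τ x) j (wsum F τ x j + i₀ * δ) := by
      rw [wsum_update]
      show Function.update (wsum F τ x) j (wsum F τ x j + i₀ * (b₀ - x (j, i₀))) = _
      rw [show b₀ - x (j, i₀) = δ by rw [hb₀def]; ring]
    refine ⟨Function.update w (Sum.inl (j, i₀)) b₀, ⟨?_, ?_⟩, ?_⟩
    · apply mem_vasilev_iff.2
      refine ⟨⟨c, hcD⟩, ?_, ?_⟩
      · rw [upl_inl]
        exact hbs.symm
      · rw [upl_inl, upl_inr, hws]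
        exact hi₀.symm
    · exact hammingDist_le_one_of (Sum.inl (j, i₀))
        (fun l hl => (Function.update_of_ne hl _ _).symm)
    · rintro w'' ⟨hmem, hdist⟩
      obtain ⟨c'', hc'', he''⟩ := mem_vasilev_iff.1 hmem
      have hne : w'' ∘ Sum.inl ≠ x := by
        intro h
        apply hxD
        rw [← h, ← hc'']
        exact c''.2
      obtain ⟨k, hk, hup, hir⟩ := sum_decomp hdist hne
      rw [← hxdef] at hk hup
      have hb'' : bsum F τ (w'' ∘ Sum.inl) = c := by
        apply hcu
        constructor
        · rw [← hc'']; exact c''.2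
        · rw [hup, bsum_update]
          exact hammingDist_update_le' _ _ _
      have hbu : Function.update (bsum F τ x) k.1
          (bsum F τ x k.1 + ((w'' ∘ Sum.inl) k - x k)) = Function.update (bsum F τ x) j (c j) := by
        rw [← bsum_update, ← hup, hb'']
        exact hcup
      have hkj : k.1 = j := by
        by_contra hkj
        have := congrFun hbu k.1
        rw [Function.update_self, Function.update_of_ne hkj] at this
        have h5 : (w'' ∘ Sum.inl) k - x k = 0 := by
          have h6 : bsum F τ x k.1 + ((w'' ∘ Sum.inl) k - x k) = bsum F τ x k.1 + 0 := by
            rw [add_zero]; exact this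
          exact add_left_cancel h6
        exact hk (sub_eq_zero.1 h5)
      have hδ'' : (w'' ∘ Sum.inl) k - x k = δ := by
        have := congrFun hbu j
        rw [← hkj, Function.update_self, Function.update_self] at this
        rw [hδdef, ← hkj]
        rw [← this]
        ring
      -- k = (j, k.2)
      have hkpair : k = (j, k.2) := by rw [← hkj]
      have hxval : (w'' ∘ Sum.inl) k = x k + δ := by rw [← hδ'']; ring
      have hwsu : wsum F τ (w'' ∘ Sum.inl)
          = Function.update (wsum F τ x) j (wsum F τ x j + k.2 * δ) := by
        rw [hup, wsum_update, hxval, hkj]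
        congr 2
        ring
      have hieq : k.2 = i₀ := by
        apply hi₀u
        rw [← hir, he'', hwsu]
        obtain ⟨cv, hcD''⟩ := c''
        have hcx : cv = c := by
          have : cv = bsum F τ (w'' ∘ Sum.inl) := hc''
          rw [this, hb'']
        exact congrFun (fam_congr fam hcD'' hcD hcx) _ |>.symm
      have hk2 : k = (j, i₀) := by rw [hkpair, hieq]
      funext l
      rcases l with k' | u
      · show (w'' ∘ Sum.inl) k' = Function.update w (Sum.inl (j, i₀)) b₀ (Sum.inl k')
        rcases eq_or_ne k' (j, i₀) with rfl | hk'
        · rw [Function.update_self, ← hk2, hxval, hk2]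
        · rw [Function.update_of_ne (by simpa using hk'), hup,
            Function.update_of_ne (hk2 ▸ hk'), hxdef]
          rfl
      · cases u
        show w'' (Sum.inr ()) = _
        rw [upl_inr]
        exact hir

end Vasilev2

section Vasilev3
variable {F : Type*} [Field F] [Fintype F] [DecidableEq F] {τ : Type*} [Fintype τ] [DecidableEq τ]

lemma vasilev_injective {D : Set (τ → F)} :
    Function.Injective (vasilev F τ D) := by
  intro fam fam' h
  funext c
  apply Subtype.ext
  funext σ
  obtain ⟨cv, hcD⟩ := c
  set w : (τ × F) ⊕ Unit → F :=
    Sum.elim (probe τ cv σ) (fun _ => (fam ⟨cv, hcD⟩).1 σ) with hwdef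
  have hwl : w ∘ Sum.inl = probe τ cv σ := rfl
  have hmem : w ∈ vasilev F τ D fam := by
    apply mem_vasilev_iff.2
    refine ⟨⟨cv, hcD⟩, by rw [hwl, bsum_probe], ?_⟩
    rw [hwl, wsum_probe]
    rfl
  rw [h] at hmem
  obtain ⟨c', hc', he'⟩ := mem_vasilev_iff.1 hmem
  have hc'v : (c' : τ → F) = cv := by rw [hc', hwl, bsum_probe]
  have he2 : (fam ⟨cv, hcD⟩).1 σ = (fam' c').1 (wsum F τ (w ∘ Sum.inl)) := he'
  rw [hwl, wsum_probe] at he2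
  rw [he2]
  obtain ⟨c'v, hc'D⟩ := c'
  exact congrFun (fam_congr fam' hc'D hcD hc'v) σ

theorem vasilev_card_le {D : Set (τ → F)} (hD : IsPerfectCode D) :
    Nat.card {f : (τ → F) → F // IsMultiQuasigroup f} ^ (Nat.card D) ≤
      Nat.card {C : Set ((τ × F) ⊕ Unit → F) // IsPerfectCode C} := by
  rw [← Nat.card_fun]
  apply Nat.card_le_card_of_injective
    (fun fam : (D → {f : (τ → F) → F // IsMultiQuasigroup f}) =>
      (⟨vasilev F τ D fam, vasilev_isPerfect hD fam⟩ :
        {C : Set ((τ × F) ⊕ Unit → F) // IsPerfectCode C}))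
  intro a b hab
  exact vasilev_injective (congrArg Subtype.val hab)

end Vasilev3

/-- The number of perfect codes in `F_q^n`, `n = (q^m-1)/(q-1)`, is at least
`Q(t,q) ^ (q^t/(t(q-1)+1))`, where `t = (n-1)/q = (q^(m-1)-1)/(q-1)`, `Q(t,q)` is the
number of `t`-ary quasigroups of order `q`, and the exponent
`q^t/(t(q-1)+1) = q^(t-m+1)` is the cardinality of a perfect code of length `t`. -/
theorem stmt_6 {q m n t : ℕ} (F : Type*) [Field F] [Fintype F] [DecidableEq F]
    (hq : Fintype.card F = q) (hm : 2 ≤ m)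
    (hn : n = (q ^ m - 1) / (q - 1))
    (ht : t = (n - 1) / q) (ht' : t = (q ^ (m - 1) - 1) / (q - 1)) :
    q ^ t / (t * (q - 1) + 1) = q ^ (t + 1 - m) ∧
    Nat.card {f : (Fin t → F) → F // IsMultiQuasigroup f} ^ (q ^ t / (t * (q - 1) + 1)) ≤
      Nat.card {C : Set (Fin n → F) // IsPerfectCode C} := by
  have hq2 : 2 ≤ q := hq ▸ Fintype.one_lt_card
  obtain ⟨p, rfl⟩ : ∃ p, q = p + 1 := ⟨q - 1, by omega⟩
  have hp1 : 1 ≤ p := by omega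
  simp only [Nat.add_sub_cancel] at hn ht' ⊢
  -- arithmetic preliminaries
  have hdvd : p ∣ (p + 1) ^ (m - 1) - 1 := by
    simpa using Nat.sub_dvd_pow_sub_pow (p + 1) 1 (m - 1)
  have hQ1 : 1 ≤ (p + 1) ^ (m - 1) := Nat.one_le_pow _ _ (by omega)
  have htp : t * p = (p + 1) ^ (m - 1) - 1 := by
    rw [ht', Nat.div_mul_cancel hdvd]
  have hQ : (p + 1) ^ (m - 1) = t * p + 1 := by
    rw [htp, Nat.sub_add_cancel hQ1]
  have hmt : m - 1 ≤ t := by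
    have h1 := ber p (m - 1)
    rw [hQ] at h1
    have h2 : (m - 1) * p ≤ t * p := by omega
    exact Nat.le_of_mul_le_mul_right h2 (by omega)
  have part1 : (p + 1) ^ t / (t * p + 1) = (p + 1) ^ (t + 1 - m) := by
    rw [← hQ, Nat.pow_div hmt (by omega)]
    congr 1
    omega
  refine ⟨part1, ?_⟩
  -- n = (p+1) * t + 1
  have hqm : (p + 1) ^ m = (p + 1) ^ (m - 1) * (p + 1) := by
    rw [← pow_succ]
    congr 1
    omega
  have hn' : n = (p + 1) * t + 1 := by
    have h3 : (p + 1) ^ m - 1 = p * ((p + 1) ^ (m - 1) + t) := by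
      have h4 : (p + 1) ^ (m - 1) * (p + 1) = p * ((p + 1) ^ (m - 1) + t) + 1 := by
        rw [hQ]; ring
      rw [hqm]
      omega
    rw [hn, h3, Nat.mul_div_cancel_left _ (by omega : 0 < p), hQ]
    ring
  -- the Hamming code of length t
  have h4 := natCard_proj_mul F (m - 1)
  rw [hq, Nat.add_sub_cancel] at h4
  have hcardP : Nat.card (Projectivization F (Fin (m - 1) → F)) = t := by
    apply Nat.eq_of_mul_eq_mul_right (show 0 < p by omega)
    rw [h4, ← htp]
  have hcardD0 : Nat.card (hammingCode F (m - 1)) = (p + 1) ^ (t + 1 - m) := by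
    rw [natCard_hammingCode, hq, hcardP]
    congr 1
    omega
  have hfinP : Fintype.card (Projectivization F (Fin (m - 1) → F)) = t := by
    rw [← Nat.card_eq_fintype_card, hcardP]
  have e : Fin t ≃ Projectivization F (Fin (m - 1) → F) :=
    Fintype.equivOfCardEq (by rw [Fintype.card_fin, hfinP])
  set D : Set (Fin t → F) := (precompEquiv e) '' (hammingCode F (m - 1)) with hDdef
  have hDperf : IsPerfectCode D := (hammingCode_isPerfect F (m - 1)).image e
  have hDcard : Nat.card D = (p + 1) ^ (t + 1 - m) := by
    rw [hDdef, ← hcardD0]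
    exact Nat.card_congr (Equiv.Set.image _ _ (precompEquiv e).injective).symm
  -- the Vasil'ev bound
  have hv := vasilev_card_le (F := F) (τ := Fin t) hDperf
  have hcardκ : Fintype.card ((Fin t × F) ⊕ Unit) = Fintype.card (Fin n) := by
    simp [hq, hn']
    ring
  have eκ : Fin n ≃ ((Fin t × F) ⊕ Unit) := (Fintype.equivOfCardEq hcardκ).symm
  have hcards := Nat.card_congr
    (perfectCodeEquiv (α := F) eκ)
  rw [part1, ← hDcard, ← hcards]
  exact hv
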